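/- Let 𝒜 be an abelian length category, 𝒯 a torsion class, and 𝒲 a Serre subcategory of the left wide subcategory W_L(𝒯). Set 𝒰 := 𝒯 ∩ ^⊥𝒲. Then 𝒰 is a torsion class, 𝒯 = 𝒰 * 𝒲, and 𝒲 = 𝒰^⊥ ∩ 𝒯. -/

import Mathlib

open CategoryTheory CategoryTheory.Limits

universe v u

attribute [local instance] CategoryTheory.Abelian.hasFiniteBiproducts

variable (C : Type u) [Category.{v} C] [Abelian C]

/-- The right Hom-perpendicular category of a class of objects. -/
def RPerp (X : Set C) : Set C := {Y | ∀ A ∈ X, ∀ f : A ⟶ Y, f = 0}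

/-- The left Hom-perpendicular category of a class of objects. -/
def LPerp (X : Set C) : Set C := {Y | ∀ A ∈ X, ∀ f : Y ⟶ A, f = 0}

/-- A torsion class: a class of objects containing the zero objects and closed under
quotients and extensions. -/
structure IsTorsionClass (T : Set C) : Prop where
  zero_mem : ∀ Z : C, IsZero Z → Z ∈ T
  quot_mem : ∀ ⦃A B : C⦄ (f : A ⟶ B), Epi f → A ∈ T → B ∈ T
  ext_mem : ∀ E : ShortComplex C, E.ShortExact → E.X₁ ∈ T → E.X₃ ∈ T → E.X₂ ∈ T

/-- A torsion-free class: a class of objects containing the zero objects and closed under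
subobjects and extensions. -/
structure IsTorsionFreeClass (F : Set C) : Prop where
  zero_mem : ∀ Z : C, IsZero Z → Z ∈ F
  sub_mem : ∀ ⦃A B : C⦄ (f : A ⟶ B), Mono f → B ∈ F → A ∈ F
  ext_mem : ∀ E : ShortComplex C, E.ShortExact → E.X₁ ∈ F → E.X₃ ∈ F → E.X₂ ∈ F

/-- The smallest torsion class containing a class of objects. -/
def torsClosure (X : Set C) : Set C := ⋂₀ {T | IsTorsionClass C T ∧ X ⊆ T}

/-- The smallest torsion-free class containing a class of objects. -/
def torfClosure (X : Set C) : Set C := ⋂₀ {F | IsTorsionFreeClass C F ∧ X ⊆ F}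

/-- `ExtStar U W` is the class of objects `X` admitting a short exact sequence
`0 → U' → X → W' → 0` with `U' ∈ U` and `W' ∈ W`. -/
def ExtStar (U W : Set C) : Set C :=
  {X | ∃ E : ShortComplex C, E.ShortExact ∧ E.X₁ ∈ U ∧ E.X₃ ∈ W ∧ Nonempty (E.X₂ ≅ X)}

/-- The additive closure of a class of objects: direct summands of finite direct sums. -/
def AddClosure (S : Set C) : Set C :=
  {X | ∃ (n : ℕ) (c : Fin n → C), (∀ i, c i ∈ S) ∧ ∃ f : (⨁ c) ⟶ X, IsSplitEpi f}

/-- Membership in the filtration closure `Filt S`: objects admitting a finite filtration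
with subquotients in `AddClosure S`. -/
inductive FiltMem (S : Set C) : C → Prop
  | of_isZero (X : C) : IsZero X → FiltMem S X
  | ext (E : ShortComplex C) : E.ShortExact → FiltMem S E.X₁ →
      E.X₃ ∈ AddClosure C S → FiltMem S E.X₂
  | of_iso (X Y : C) (e : X ≅ Y) : FiltMem S X → FiltMem S Y

/-- The filtration closure of a class of objects. -/
def Filt (S : Set C) : Set C := {X | FiltMem C S X}

/-- The class of quotients of objects of the additive closure of `S`. -/
def Fac (S : Set C) : Set C := {X | ∃ A ∈ AddClosure C S, ∃ f : A ⟶ X, Epi f}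

/-- The class of subobjects of objects of the additive closure of `S`. -/
def Subm (S : Set C) : Set C := {X | ∃ A ∈ AddClosure C S, ∃ f : X ⟶ A, Mono f}

/-- A wide subcategory: closed under kernels, cokernels and extensions
(and containing the zero objects). -/
structure IsWide (W : Set C) : Prop where
  zero_mem : ∀ Z : C, IsZero Z → Z ∈ W
  ker_mem : ∀ ⦃X Y : C⦄ (f : X ⟶ Y), X ∈ W → Y ∈ W → kernel f ∈ W
  coker_mem : ∀ ⦃X Y : C⦄ (f : X ⟶ Y), X ∈ W → Y ∈ W → cokernel f ∈ W
  ext_mem : ∀ E : ShortComplex C, E.ShortExact → E.X₁ ∈ W → E.X₃ ∈ W → E.X₂ ∈ W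

/-- A brick: a nonzero object all of whose nonzero endomorphisms are invertible
(equivalently, the endomorphism ring is a division ring). -/
def IsBrick (S : C) : Prop := ¬ IsZero S ∧ ∀ f : S ⟶ S, f = 0 ∨ IsIso f

/-- A simple object of the full abelian subcategory determined by a wide subcategory `W`. -/
def IsSimpleIn (W : Set C) (S : C) : Prop :=
  S ∈ W ∧ ¬ IsZero S ∧ ∀ ⦃A : C⦄ (f : A ⟶ S), A ∈ W → Mono f → IsZero A ∨ IsIso f

/-- A Hasse arrow `T → U` in the poset of torsion classes: `U ⊊ T` are adjacent. -/
def IsHasseArrow (T U : Set C) : Prop :=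
  IsTorsionClass C T ∧ IsTorsionClass C U ∧ U ⊂ T ∧
    ∀ V : Set C, IsTorsionClass C V → U ⊆ V → V ⊆ T → V = U ∨ V = T

/-- A Hasse arrow `F → G` in the poset of torsion-free classes: `G ⊊ F` are adjacent. -/
def IsHasseArrowTorf (F G : Set C) : Prop :=
  IsTorsionFreeClass C F ∧ IsTorsionFreeClass C G ∧ G ⊂ F ∧
    ∀ H : Set C, IsTorsionFreeClass C H → G ⊆ H → H ⊆ F → H = G ∨ H = F

/-- The brick label of a Hasse arrow `T → U` of torsion classes:
the unique brick in `U^⊥ ∩ T`. -/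
def IsBrickLabel (T U : Set C) (S : C) : Prop := IsBrick C S ∧ S ∈ RPerp C U ∩ T

/-- The brick label of a Hasse arrow `F → G` of torsion-free classes:
the unique brick in `^⊥G ∩ F`. -/
def IsBrickLabelTorf (F G : Set C) (S : C) : Prop := IsBrick C S ∧ S ∈ LPerp C G ∩ F

/-- The left wide subcategory of a torsion class. -/
def WL (T : Set C) : Set C :=
  {X | X ∈ T ∧ ∀ ⦃Y : C⦄ (g : Y ⟶ X), Y ∈ T → kernel g ∈ T}

/-- The right wide subcategory of a torsion-free class. -/
def WR (F : Set C) : Set C :=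
  {X | X ∈ F ∧ ∀ ⦃Y : C⦄ (f : X ⟶ Y), Y ∈ F → cokernel f ∈ F}

/-- A Serre subcategory of the abelian category given by a wide subcategory `W`:
closed under extensions, subobjects and quotients within `W`. -/
structure IsSerreIn (W S : Set C) : Prop where
  subset : S ⊆ W
  zero_mem : ∀ Z : C, IsZero Z → Z ∈ S
  sub_mem : ∀ ⦃A X : C⦄ (f : A ⟶ X), Mono f → A ∈ W → X ∈ S → A ∈ S
  quot_mem : ∀ ⦃X B : C⦄ (f : X ⟶ B), Epi f → B ∈ W → X ∈ S → B ∈ S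
  ext_mem : ∀ E : ShortComplex C, E.ShortExact → E.X₂ ∈ W →
    E.X₁ ∈ S → E.X₃ ∈ S → E.X₂ ∈ S

/-- A torsion class of the abelian category given by a wide subcategory `W`:
a subclass of `W` containing the zero objects and closed under quotients in `W`
and extensions. -/
structure IsTorsionClassIn (W X : Set C) : Prop where
  subset : X ⊆ W
  zero_mem : ∀ Z : C, IsZero Z → Z ∈ X
  quot_mem : ∀ ⦃A B : C⦄ (f : A ⟶ B), Epi f → A ∈ X → B ∈ W → B ∈ X
  ext_mem : ∀ E : ShortComplex C, E.ShortExact → E.X₁ ∈ X → E.X₃ ∈ X → E.X₂ ∈ X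

section Aux

variable {C : Type u} [Category.{v} C] [Abelian C]

open CategoryTheory.Abelian

attribute [local instance] CategoryTheory.Abelian.Pseudoelement.objectToSort
  CategoryTheory.Abelian.Pseudoelement.homToFun

lemma tors_iso' {T : Set C} (hT : IsTorsionClass C T) {X Y : C} (e : X ≅ Y) (hX : X ∈ T) :
    Y ∈ T :=
  hT.quot_mem e.hom inferInstance hX

lemma WL_iso' {T : Set C} (hT : IsTorsionClass C T) {X Y : C} (e : X ≅ Y)
    (hX : X ∈ WL C T) : Y ∈ WL C T := by
  refine ⟨tors_iso' hT e hX.1, fun Z g hZ => ?_⟩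
  exact tors_iso' hT (kernelCompMono g e.inv) (hX.2 (g ≫ e.inv) hZ)

lemma serre_iso' {T W : Set C} (hT : IsTorsionClass C T) (hW : IsSerreIn C (WL C T) W)
    {X Y : C} (e : X ≅ Y) (hX : X ∈ W) : Y ∈ W :=
  hW.quot_mem e.hom inferInstance (WL_iso' hT e (hW.subset hX)) hX

lemma WL_sub' {T : Set C} (hT : IsTorsionClass C T) {A X : C} (f : A ⟶ X) [Mono f]
    (hA : A ∈ T) (hX : X ∈ WL C T) : A ∈ WL C T := by
  refine ⟨hA, fun Z g hZ => ?_⟩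
  exact tors_iso' hT (kernelCompMono g f) (hX.2 (g ≫ f) hZ)

lemma exact_cok {P Q : C} (f : P ⟶ Q) :
    (ShortComplex.mk f (cokernel.π f) (cokernel.condition f)).Exact :=
  ShortComplex.exact_of_g_is_cokernel _ (cokernelIsCokernel f)

lemma exact_ker {P Q : C} (f : P ⟶ Q) :
    (ShortComplex.mk (kernel.ι f) f (kernel.condition f)).Exact :=
  ShortComplex.exact_of_f_is_kernel _ (kernelIsKernel f)

lemma mono_coim {P Q : C} (g : P ⟶ Q) :
    Mono (cokernel.desc (kernel.ι g) g (kernel.condition g)) := by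
  apply Pseudoelement.mono_of_zero_of_map_zero
  intro a ha
  obtain ⟨x, rfl⟩ := Pseudoelement.pseudo_surjective_of_epi (cokernel.π (kernel.ι g)) a
  rw [← Pseudoelement.comp_apply, cokernel.π_desc] at ha
  obtain ⟨y, hy⟩ := Pseudoelement.pseudo_exact_of_exact (exact_ker g) x ha
  rw [← hy, ← Pseudoelement.comp_apply, cokernel.condition, Pseudoelement.zero_apply]

end Aux
section Aux2
variable {C : Type u} [Category.{v} C] [Abelian C]

lemma WL_ext' {T : Set C} (hT : IsTorsionClass C T) (E : ShortComplex C) (hE : E.ShortExact)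
    (h1 : E.X₁ ∈ WL C T) (h3 : E.X₃ ∈ WL C T) : E.X₂ ∈ WL C T := by
  haveI := hE.mono_f
  haveI := hE.epi_g
  refine ⟨hT.ext_mem E hE h1.1 h3.1, fun Y g hY => ?_⟩
  have hK : kernel (g ≫ E.g) ∈ T := h3.2 (g ≫ E.g) hY
  obtain ⟨h, hh⟩ := KernelFork.IsLimit.lift' hE.fIsKernel (kernel.ι (g ≫ E.g) ≫ g)
    (by rw [Category.assoc, kernel.condition])
  have hkh : kernel h ∈ T := h1.2 h hK
  have hh' : h ≫ E.f = kernel.ι (g ≫ E.g) ≫ g := hh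
  have w : (kernel.ι h ≫ kernel.ι (g ≫ E.g)) ≫ g = 0 := by
    rw [Category.assoc, ← hh', ← Category.assoc, kernel.condition, zero_comp]
  have ht0 : kernel.ι g ≫ g ≫ E.g = 0 := by
    rw [← Category.assoc, kernel.condition, zero_comp]
  have ht : kernel.lift (g ≫ E.g) (kernel.ι g) ht0 ≫ h = 0 := by
    rw [← cancel_mono E.f, Category.assoc, hh', zero_comp, ← Category.assoc, kernel.lift_ι,
      kernel.condition]
  refine tors_iso' hT
    (Iso.mk (kernel.lift g (kernel.ι h ≫ kernel.ι (g ≫ E.g)) w)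
      (kernel.lift h (kernel.lift (g ≫ E.g) (kernel.ι g) ht0) ht) ?_ ?_) hkh
  · rw [← cancel_mono (kernel.ι h), ← cancel_mono (kernel.ι (g ≫ E.g))]
    simp [kernel.lift_ι]
  · rw [← cancel_mono (kernel.ι g)]
    simp [kernel.lift_ι]

lemma U_tors {T : Set C} (W : Set C) (hT : IsTorsionClass C T) :
    IsTorsionClass C (T ∩ LPerp C W) := by
  constructor
  · intro Z hZ
    exact ⟨hT.zero_mem Z hZ, fun A hA f => hZ.eq_of_src f 0⟩
  · intro A B f hf hA
    haveI := hf
    refine ⟨hT.quot_mem f hf hA.1, fun W₀ hW₀ g => ?_⟩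
    rw [← cancel_epi f, comp_zero]
    exact hA.2 W₀ hW₀ (f ≫ g)
  · intro E hE h1 h3
    haveI := hE.epi_g
    refine ⟨hT.ext_mem E hE h1.1 h3.1, fun W₀ hW₀ g => ?_⟩
    obtain ⟨φ, hφ⟩ := CokernelCofork.IsColimit.desc' hE.gIsCokernel g (h1.2 W₀ hW₀ (E.f ≫ g))
    have hφ' : E.g ≫ φ = g := hφ
    rw [← hφ', h3.2 W₀ hW₀ φ, comp_zero]

end Aux2
section Aux3
variable {C : Type u} [Category.{v} C] [Abelian C]

open CategoryTheory.Abelian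

attribute [local instance] CategoryTheory.Abelian.Pseudoelement.objectToSort
  CategoryTheory.Abelian.Pseudoelement.homToFun

lemma exists_ses {T W : Set C} [Artinian C] (hT : IsTorsionClass C T)
    (hW : IsSerreIn C (WL C T) W) {X : C} (hX : X ∈ T) :
    ∃ E : ShortComplex C, E.ShortExact ∧ E.X₁ ∈ T ∩ LPerp C W ∧ E.X₃ ∈ W ∧
      Nonempty (E.X₂ ≅ X) := by
  have htop : (⊤ : Subobject X) ∈ {P : Subobject X | cokernel P.arrow ∈ W} :=
    hW.zero_mem _ ((isZero_zero C).of_iso (cokernel.ofEpi _))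
  obtain ⟨P, hPS, hPmin⟩ := (wellFounded_lt (α := Subobject X)).has_min
    {P : Subobject X | cokernel P.arrow ∈ W} ⟨⊤, htop⟩
  have hPW : cokernel P.arrow ∈ W := hPS
  have hPT : (P : C) ∈ T := by
    have h1 : kernel (cokernel.π P.arrow) ∈ T := (hW.subset hPW).2 (cokernel.π P.arrow) hX
    have h2 : IsLimit (KernelFork.ofι P.arrow (cokernel.condition P.arrow)) :=
      Abelian.monoIsKernelOfCokernel (CokernelCofork.ofπ _ (cokernel.condition P.arrow))
        (cokernelIsCokernel P.arrow)
    exact tors_iso' hT (IsLimit.conePointUniqueUpToIso (kernelIsKernel _) h2) h1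
  have hPL : (P : C) ∈ LPerp C W := by
    intro W₀ hW₀ g
    by_contra hg
    have hKT : kernel g ∈ T := (hW.subset hW₀).2 g hPT
    -- Step A : cokernel (kernel.ι g) ∈ W
    have hcmT : cokernel (kernel.ι g) ∈ T := hT.quot_mem (cokernel.π (kernel.ι g))
      inferInstance hPT
    haveI hdmono : Mono (cokernel.desc (kernel.ι g) g (kernel.condition g)) := mono_coim g
    have hcmWL : cokernel (kernel.ι g) ∈ WL C T :=
      WL_sub' hT (cokernel.desc (kernel.ι g) g (kernel.condition g)) hcmT
        (hW.subset hW₀)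
    have hcmW : cokernel (kernel.ι g) ∈ W := hW.sub_mem _ hdmono hcmWL hW₀
    -- Step B : SES  cokernel m ⟶ cokernel (m ≫ i) ⟶ cokernel i
    have hα0 : kernel.ι g ≫ P.arrow ≫ cokernel.π (kernel.ι g ≫ P.arrow) = 0 := by
      rw [← Category.assoc, cokernel.condition]
    have hβ0 : (kernel.ι g ≫ P.arrow) ≫ cokernel.π P.arrow = 0 := by
      rw [Category.assoc, cokernel.condition, comp_zero]
    have hπα : cokernel.π (kernel.ι g) ≫
        cokernel.desc (kernel.ι g) (P.arrow ≫ cokernel.π (kernel.ι g ≫ P.arrow)) hα0 =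
        P.arrow ≫ cokernel.π (kernel.ι g ≫ P.arrow) := cokernel.π_desc _ _ _
    have hπβ : cokernel.π (kernel.ι g ≫ P.arrow) ≫
        cokernel.desc (kernel.ι g ≫ P.arrow) (cokernel.π P.arrow) hβ0 =
        cokernel.π P.arrow := cokernel.π_desc _ _ _
    have hαβ : cokernel.desc (kernel.ι g) (P.arrow ≫ cokernel.π (kernel.ι g ≫ P.arrow)) hα0 ≫
        cokernel.desc (kernel.ι g ≫ P.arrow) (cokernel.π P.arrow) hβ0 = 0 := by
      rw [← cancel_epi (cokernel.π (kernel.ι g)), comp_zero, ← Category.assoc, hπα,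
        Category.assoc, hπβ, cokernel.condition]
    have hexmi := Pseudoelement.pseudo_exact_of_exact (exact_cok (kernel.ι g ≫ P.arrow))
    have hexi := Pseudoelement.pseudo_exact_of_exact (exact_cok P.arrow)
    haveI hαmono : Mono (cokernel.desc (kernel.ι g)
        (P.arrow ≫ cokernel.π (kernel.ι g ≫ P.arrow)) hα0) := by
      apply Pseudoelement.mono_of_zero_of_map_zero
      intro a ha
      obtain ⟨x, rfl⟩ := Pseudoelement.pseudo_surjective_of_epi (cokernel.π (kernel.ι g)) a
      rw [← Pseudoelement.comp_apply, hπα, Pseudoelement.comp_apply] at ha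
      obtain ⟨y, hy⟩ := hexmi _ ha
      rw [Pseudoelement.comp_apply] at hy
      have hmx' : kernel.ι g y = x := Pseudoelement.pseudo_injective_of_mono P.arrow hy
      rw [← hmx', ← Pseudoelement.comp_apply, cokernel.condition, Pseudoelement.zero_apply]
    have hFex : (ShortComplex.mk _ _ hαβ).Exact := by
      apply Pseudoelement.exact_of_pseudo_exact
      intro b hb
      obtain ⟨y, rfl⟩ := Pseudoelement.pseudo_surjective_of_epi
        (cokernel.π (kernel.ι g ≫ P.arrow)) b
      rw [← Pseudoelement.comp_apply, hπβ] at hb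
      obtain ⟨z, hz⟩ := hexi _ hb
      refine ⟨(cokernel.π (kernel.ι g)) z, ?_⟩
      rw [← Pseudoelement.comp_apply, hπα, Pseudoelement.comp_apply, hz]
    haveI hβepi : Epi (cokernel.desc (kernel.ι g ≫ P.arrow) (cokernel.π P.arrow) hβ0) :=
      epi_of_epi_fac hπβ
    have hFse : (ShortComplex.mk _ _ hαβ).ShortExact := { exact := hFex }
    have hcmiWL : cokernel (kernel.ι g ≫ P.arrow) ∈ WL C T :=
      WL_ext' hT _ hFse (hW.subset hcmW) (hW.subset hPW)
    have hcmiW : cokernel (kernel.ι g ≫ P.arrow) ∈ W := hW.ext_mem _ hFse hcmiWL hcmW hPW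
    -- Step C : contradiction with minimality
    have e1 : (Subobject.underlyingIso (kernel.ι g ≫ P.arrow)).hom ≫ (kernel.ι g ≫ P.arrow) =
        (Subobject.mk (kernel.ι g ≫ P.arrow)).arrow :=
      Subobject.underlyingIso_hom_comp_eq_mk _
    have e2 : cokernel (Subobject.mk (kernel.ι g ≫ P.arrow)).arrow ≅
        cokernel (kernel.ι g ≫ P.arrow) :=
      (cokernelIsoOfEq e1.symm) ≪≫ cokernelEpiComp _ _
    have hQS : Subobject.mk (kernel.ι g ≫ P.arrow) ∈ {P : Subobject X | cokernel P.arrow ∈ W} :=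
      serre_iso' hT hW e2.symm hcmiW
    have hQP : Subobject.mk (kernel.ι g ≫ P.arrow) < P := by
      refine lt_of_le_of_ne ?_ ?_
      · have := Subobject.mk_le_mk_of_comm (f₁ := kernel.ι g ≫ P.arrow) (f₂ := P.arrow)
          (kernel.ι g) rfl
        rwa [Subobject.mk_arrow] at this
      · intro hEq
        have hle : Subobject.mk P.arrow ≤ Subobject.mk (kernel.ι g ≫ P.arrow) := by
          rw [Subobject.mk_arrow]
          exact hEq.ge
        have hk : Subobject.ofMkLEMk P.arrow (kernel.ι g ≫ P.arrow) hle ≫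
            (kernel.ι g ≫ P.arrow) = P.arrow := Subobject.ofMkLEMk_comp hle
        have hk1 : Subobject.ofMkLEMk P.arrow (kernel.ι g ≫ P.arrow) hle ≫ kernel.ι g =
            𝟙 _ := by
          rw [← cancel_mono P.arrow, Category.assoc, hk, Category.id_comp]
        haveI : Epi (kernel.ι g) := epi_of_epi_fac hk1
        apply hg
        rw [← cancel_epi (kernel.ι g), kernel.condition, comp_zero]
    exact hPmin _ hQS hQP
  refine ⟨ShortComplex.mk P.arrow (cokernel.π P.arrow) (cokernel.condition _),
    { exact := exact_cok P.arrow }, ⟨hPT, hPL⟩, hPW, ⟨Iso.refl X⟩⟩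

end Aux3
/-- For a torsion class `T` and a Serre subcategory `W` of `W_L(T)`, setting
`U := T ∩ ^⊥W`, the class `U` is a torsion class, `T = U * W` and `W = U^⊥ ∩ T`. -/
theorem stmt_15 [Noetherian C] [Artinian C]
    (T : Set C) (hT : IsTorsionClass C T)
    (W : Set C) (hW : IsSerreIn C (WL C T) W)
    (U : Set C) (hU : U = T ∩ LPerp C W) :
    IsTorsionClass C U ∧ T = ExtStar C U W ∧ W = RPerp C U ∩ T := by
  subst hU
  refine ⟨U_tors W hT, ?_, ?_⟩
  · ext X
    constructor
    · intro hX
      obtain ⟨E, hE, h1, h3, he⟩ := exists_ses hT hW hX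
      exact ⟨E, hE, h1, h3, he⟩
    · rintro ⟨E, hE, h1, h3, ⟨e⟩⟩
      exact tors_iso' hT e (hT.ext_mem E hE h1.1 (hW.subset h3).1)
  · ext X
    constructor
    · intro hX
      refine ⟨?_, (hW.subset hX).1⟩
      intro A hA f
      exact hA.2 X hX f
    · rintro ⟨hXperp, hXT⟩
      obtain ⟨E, hE, h1, h3, ⟨e⟩⟩ := exists_ses hT hW hXT
      haveI := hE.mono_f
      haveI := hE.epi_g
      have hf0 : E.f = 0 := by
        have h := hXperp E.X₁ h1 (E.f ≫ e.hom)
        rw [← cancel_mono e.hom, zero_comp]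
        exact h
      haveI hmono : Mono E.g := by
        apply CategoryTheory.Abelian.Pseudoelement.mono_of_zero_of_map_zero
        intro b hb
        obtain ⟨a, ha⟩ :=
          CategoryTheory.Abelian.Pseudoelement.pseudo_exact_of_exact hE.exact b hb
        rw [← ha, hf0, CategoryTheory.Abelian.Pseudoelement.zero_apply]
      haveI : IsIso E.g := isIso_of_mono_of_epi _
      exact serre_iso' hT hW ((asIso E.g).symm ≪≫ e) h3
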